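/- arXiv:2012.00271 — 2 statements merged into one kernel-verified Lean document; each statement's English description precedes it below -/
import Mathlib

section
/- Let $z:\mathbb{R}\to\mathbb{R}$ be continuous and suppose for every $\gamma>0$ there is $R(\gamma)>0$ with $\max\{|z(t)|,|\int_0^t z|\}\le\gamma|t|+R(\gamma)$ for all $t$. For $\epsilon\in(0,1]$ define $M_\epsilon=\int_{-\infty}^0 \exp\big(2s+2\epsilon|\int_s^0 z(\varsigma)d\varsigma|+2\epsilon|z(s)|\big)\,ds$. Then $M_\epsilon$ is finite for every $\epsilon\in(0,1]$, and $\lim_{\epsilon\to0^+} M_\epsilon = \tfrac12$. -/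
open MeasureTheory Filter Real intervalIntegral

lemma exp_mul_integrableOn_Iic {a : ℝ} (ha : 0 < a) (c : ℝ) :
    IntegrableOn (fun x => Real.exp (a * x)) (Set.Iic c) := by
  refine integrableOn_Iic_of_intervalIntegral_norm_bounded (Real.exp (a * c) / a) c
    (fun y => ((Real.continuous_exp.comp (continuous_const.mul continuous_id)).intervalIntegrable _ _).1)
    tendsto_id (Eventually.of_forall fun y => ?_)
  show (∫ x in y..c, ‖Real.exp (a * x)‖) ≤ Real.exp (a * c) / a
  have h1 : (∫ x in y..c, ‖Real.exp (a * x)‖) = ∫ x in y..c, Real.exp (a * x) := by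
    simp [Real.norm_eq_abs, abs_of_pos (Real.exp_pos _)]
  have h2 : (∫ x in y..c, Real.exp (a * x))
      = a⁻¹ • ∫ x in a * y..a * c, Real.exp x :=
    intervalIntegral.integral_comp_mul_left Real.exp ha.ne'
  rw [h1, h2, _root_.integral_exp, smul_eq_mul]
  rw [div_eq_inv_mul]
  have : Real.exp (a * c) - Real.exp (a * y) ≤ Real.exp (a * c) := by
    linarith [Real.exp_pos (a * y)]
  exact mul_le_mul_of_nonneg_left this (by positivity)

lemma integral_exp_mul_Iic' {a : ℝ} (ha : 0 < a) (c : ℝ) :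
    ∫ x in Set.Iic c, Real.exp (a * x) = Real.exp (a * c) / a := by
  refine tendsto_nhds_unique
    (intervalIntegral_tendsto_integral_Iic _ (exp_mul_integrableOn_Iic ha c) tendsto_id) ?_
  have h2 : ∀ y : ℝ, (∫ x in y..c, Real.exp (a * x))
      = (Real.exp (a * c) - Real.exp (a * y)) / a := by
    intro y
    rw [intervalIntegral.integral_comp_mul_left Real.exp ha.ne',
      _root_.integral_exp, smul_eq_mul, div_eq_inv_mul]
  simp_rw [h2]
  have hlim : Tendsto (fun y : ℝ => Real.exp (a * y)) atBot (nhds 0) :=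
    Real.tendsto_exp_atBot.comp (tendsto_id.const_mul_atBot ha)
  have : Tendsto (fun y : ℝ => (Real.exp (a * c) - Real.exp (a * y)) / a) atBot
      (nhds ((Real.exp (a * c) - 0) / a)) :=
    ((tendsto_const_nhds.sub hlim).div_const a)
  simpa using this

/-- Convergence (3.51): for a continuous `z` with sublinear growth (in the quantitative
form (3.14)), the tempered quantity
`M_ε = ∫_{-∞}^0 exp(2s + 2ε|∫_s^0 z| + 2ε|z(s)|) ds` is finite for every `ε ∈ (0,1]`
and `M_ε → 1/2` as `ε → 0⁺`. -/
theorem stmt_9 (z : ℝ → ℝ) (hz : Continuous z)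
    (hR : ∀ γ : ℝ, 0 < γ → ∃ R : ℝ, 0 < R ∧ ∀ t : ℝ,
      max |z t| |∫ ς in (0:ℝ)..t, z ς| ≤ γ * |t| + R) :
    (∀ ε ∈ Set.Ioc (0:ℝ) 1,
      IntegrableOn
        (fun s => Real.exp (2 * s + 2 * ε * |∫ ς in s..(0:ℝ), z ς| + 2 * ε * |z s|))
        (Set.Iic (0:ℝ))) ∧
    Tendsto
      (fun ε : ℝ =>
        ∫ s in Set.Iic (0:ℝ),
          Real.exp (2 * s + 2 * ε * |∫ ς in s..(0:ℝ), z ς| + 2 * ε * |z s|))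
      (nhdsWithin 0 (Set.Ioi 0)) (nhds (1 / 2)) := by
  obtain ⟨R, hRpos, hRspec⟩ := hR (1/4) (by norm_num)
  -- continuity of the integrand (in s)
  have hcont : Continuous fun s : ℝ => |∫ ς in s..(0:ℝ), z ς| := by
    have h1 : Continuous fun s : ℝ => ∫ ς in (0:ℝ)..s, z ς :=
      intervalIntegral.continuous_primitive (fun a b => hz.intervalIntegrable a b) 0
    have h2 : Continuous fun s : ℝ => ∫ ς in s..(0:ℝ), z ς := by
      have : (fun s : ℝ => ∫ ς in s..(0:ℝ), z ς)
          = fun s : ℝ => -∫ ς in (0:ℝ)..s, z ς := by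
        funext s; rw [intervalIntegral.integral_symm]
      rw [this]; exact h1.neg
    exact continuous_abs.comp h2
  have hFcont : ∀ ε : ℝ, Continuous
      (fun s => Real.exp (2 * s + 2 * ε * |∫ ς in s..(0:ℝ), z ς| + 2 * ε * |z s|)) := by
    intro ε
    exact Real.continuous_exp.comp
      (((continuous_const.mul continuous_id').add
        (continuous_const.mul hcont)).add
        (continuous_const.mul (continuous_abs.comp hz)))
  -- key pointwise bounds
  have hbound : ∀ s : ℝ, s ≤ 0 →
      |∫ ς in s..(0:ℝ), z ς| ≤ (1/4) * (-s) + R ∧ |z s| ≤ (1/4) * (-s) + R := by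
    intro s hs
    have h := hRspec s
    have habs : |s| = -s := abs_of_nonpos hs
    constructor
    · have : |∫ ς in s..(0:ℝ), z ς| = |∫ ς in (0:ℝ)..s, z ς| := by
        rw [intervalIntegral.integral_symm, abs_neg]
      rw [this]
      calc |∫ ς in (0:ℝ)..s, z ς| ≤ max |z s| |∫ ς in (0:ℝ)..s, z ς| := le_max_right _ _
        _ ≤ (1/4) * |s| + R := h
        _ = (1/4) * (-s) + R := by rw [habs]
    · calc |z s| ≤ max |z s| |∫ ς in (0:ℝ)..s, z ς| := le_max_left _ _
        _ ≤ (1/4) * |s| + R := h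
        _ = (1/4) * (-s) + R := by rw [habs]
  have hexp_bound : ∀ ε : ℝ, 0 < ε → ε ≤ 1 → ∀ s : ℝ, s ≤ 0 →
      2 * s + 2 * ε * |∫ ς in s..(0:ℝ), z ς| + 2 * ε * |z s| ≤ s + 4 * R := by
    intro ε hε hε1 s hs
    obtain ⟨h1, h2⟩ := hbound s hs
    nlinarith [mul_le_mul_of_nonneg_left h1 (by positivity : (0:ℝ) ≤ 2 * ε),
      mul_le_mul_of_nonneg_left h2 (by positivity : (0:ℝ) ≤ 2 * ε),
      mul_nonneg hε.le (neg_nonneg.mpr hs), mul_nonneg (sub_nonneg.mpr hε1) (neg_nonneg.mpr hs),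
      mul_le_mul_of_nonneg_left hε1 hRpos.le]
  have hdom : IntegrableOn (fun s => Real.exp (4 * R) * Real.exp s) (Set.Iic (0:ℝ)) :=
    (integrableOn_exp_Iic 0).const_mul _
  have hle : ∀ ε : ℝ, 0 < ε → ε ≤ 1 → ∀ s ∈ Set.Iic (0:ℝ),
      ‖Real.exp (2 * s + 2 * ε * |∫ ς in s..(0:ℝ), z ς| + 2 * ε * |z s|)‖
        ≤ Real.exp (4 * R) * Real.exp s := by
    intro ε hε hε1 s hs
    rw [Real.norm_eq_abs, abs_of_pos (Real.exp_pos _), ← Real.exp_add]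
    exact Real.exp_le_exp.mpr (by linarith [hexp_bound ε hε hε1 s hs])
  have hInt : ∀ ε ∈ Set.Ioc (0:ℝ) 1,
      IntegrableOn
        (fun s => Real.exp (2 * s + 2 * ε * |∫ ς in s..(0:ℝ), z ς| + 2 * ε * |z s|))
        (Set.Iic (0:ℝ)) := by
    intro ε ⟨hε, hε1⟩
    refine Integrable.mono' hdom ((hFcont ε).aestronglyMeasurable.restrict) ?_
    filter_upwards [ae_restrict_mem measurableSet_Iic] with s hs
    exact hle ε hε hε1 s hs
  refine ⟨hInt, ?_⟩
  have hval : (1:ℝ)/2 = ∫ s in Set.Iic (0:ℝ), Real.exp (2 * s) := by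
    rw [integral_exp_mul_Iic' (by norm_num : (0:ℝ) < 2) 0]
    norm_num
  rw [hval]
  refine tendsto_integral_filter_of_dominated_convergence
    (fun s => Real.exp (4 * R) * Real.exp s) ?_ ?_ hdom ?_
  · exact Eventually.of_forall fun ε => ((hFcont ε).aestronglyMeasurable.restrict)
  · have hmem : Set.Ioc (0:ℝ) 1 ∈ nhdsWithin (0:ℝ) (Set.Ioi 0) :=
      Ioc_mem_nhdsGT_of_mem (by norm_num : (0:ℝ) ∈ Set.Ico (0:ℝ) 1)
    filter_upwards [hmem] with ε hε
    filter_upwards [ae_restrict_mem measurableSet_Iic] with s hs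
    exact hle ε hε.1 hε.2 s hs
  · refine Eventually.of_forall fun s => ?_
    have : Tendsto
        (fun ε : ℝ => Real.exp (2 * s + 2 * ε * |∫ ς in s..(0:ℝ), z ς| + 2 * ε * |z s|))
        (nhds 0) (nhds (Real.exp (2 * s + 2 * 0 * |∫ ς in s..(0:ℝ), z ς| + 2 * 0 * |z s|))) := by
      exact (Real.continuous_exp.comp (by continuity)).tendsto 0
    simpa using this.mono_left nhdsWithin_le_nhds
end

section
/- Let $z:\mathbb{R}\to\mathbb{R}$ be continuous, let $\epsilon\in(0,1]$, and define the shifted process $z_{-1}(s)=z(s-1)$. Define $m_{1\epsilon}=e^{2\epsilon\max_{s\in[-1,0]}|z(s)|}$ and $M_\epsilon=\int_{-\infty}^0 e^{2s+2\epsilon|\int_s^0 z|+2\epsilon|z(s)|}ds$, and define $M_\epsilon(\theta_{-1})$ analogously with $z$ replaced by $z_{-1}$. Then $M_\epsilon(\theta_{-1}) \le e^2\, m_{1\epsilon}\, M_\epsilon$. -/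
open MeasureTheory Real intervalIntegral

/-- Shift estimate (3.33): with `z₋₁(s) = z(s-1)`,
`m_{1ε} = e^{2ε max_{[-1,0]}|z|}` and
`M_ε = ∫_{-∞}^0 e^{2s + 2ε|∫_s^0 z| + 2ε|z(s)|} ds`, one has
`M_ε(θ_{-1}) ≤ e² m_{1ε} M_ε`. -/
theorem stmt_10 (z : ℝ → ℝ) (hz : Continuous z) (ε : ℝ) (hε : ε ∈ Set.Ioc (0:ℝ) 1)
    (hint : IntegrableOn
      (fun s => Real.exp (2 * s + 2 * ε * |∫ ς in s..(0:ℝ), z ς| + 2 * ε * |z s|))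
      (Set.Iic (0:ℝ)))
    (hint' : IntegrableOn
      (fun s => Real.exp (2 * s + 2 * ε * |∫ ς in s..(0:ℝ), z (ς - 1)| + 2 * ε * |z (s - 1)|))
      (Set.Iic (0:ℝ))) :
    (∫ s in Set.Iic (0:ℝ),
        Real.exp (2 * s + 2 * ε * |∫ ς in s..(0:ℝ), z (ς - 1)| + 2 * ε * |z (s - 1)|)) ≤
      Real.exp 2 * Real.exp (2 * ε * sSup ((fun s => |z s|) '' Set.Icc (-1:ℝ) 0)) *
        ∫ s in Set.Iic (0:ℝ),
          Real.exp (2 * s + 2 * ε * |∫ ς in s..(0:ℝ), z ς| + 2 * ε * |z s|) := by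
  obtain ⟨hε0, hε1⟩ := hε
  set M : ℝ := sSup ((fun s => |z s|) '' Set.Icc (-1:ℝ) 0) with hMdef
  set g : ℝ → ℝ := fun s => Real.exp (2 * s + 2 * ε * |∫ ς in s..(0:ℝ), z ς| + 2 * ε * |z s|)
    with hg
  set C : ℝ := Real.exp 2 * Real.exp (2 * ε * M) with hC
  have hbdd : BddAbove ((fun s => |z s|) '' Set.Icc (-1:ℝ) 0) :=
    (isCompact_Icc.image (hz.abs)).bddAbove
  have hM0 : ∀ s ∈ Set.Icc (-1:ℝ) 0, |z s| ≤ M := fun s hs =>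
    le_csSup hbdd ⟨s, hs, rfl⟩
  have hMnonneg : (0:ℝ) ≤ M :=
    le_trans (abs_nonneg _) (hM0 0 ⟨by norm_num, le_refl _⟩)
  -- bound on |∫_{-1}^0 z|
  have hIz : |∫ ς in (-1:ℝ)..0, z ς| ≤ M := by
    have := intervalIntegral.norm_integral_le_of_norm_le_const (C := M)
      (f := z) (a := (-1:ℝ)) (b := 0) (fun x hx => by
        rw [Set.uIoc_of_le (by norm_num : (-1:ℝ) ≤ 0)] at hx
        exact hM0 x ⟨le_of_lt hx.1, hx.2⟩)
    simpa using this
  -- pointwise bound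
  have hpoint : ∀ s : ℝ,
      Real.exp (2 * s + 2 * ε * |∫ ς in s..(0:ℝ), z (ς - 1)| + 2 * ε * |z (s - 1)|)
        ≤ C * g (s - 1) := by
    intro s
    have h1 : (∫ ς in s..(0:ℝ), z (ς - 1)) = ∫ ς in (s-1)..(-1:ℝ), z ς := by
      exact (by norm_num : (0:ℝ)-1 = -1) ▸ intervalIntegral.integral_comp_sub_right (a := s) (b := 0) z 1
    have hadj : (∫ ς in (s-1)..(-1:ℝ), z ς) + ∫ ς in (-1:ℝ)..0, z ς
        = ∫ ς in (s-1)..(0:ℝ), z ς :=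
      intervalIntegral.integral_add_adjacent_intervals
        (hz.intervalIntegrable _ _) (hz.intervalIntegrable _ _)
    have h2 : |∫ ς in s..(0:ℝ), z (ς - 1)| ≤ |∫ ς in (s-1)..(0:ℝ), z ς| + M := by
      rw [h1]
      have : (∫ ς in (s-1)..(-1:ℝ), z ς)
          = (∫ ς in (s-1)..(0:ℝ), z ς) - ∫ ς in (-1:ℝ)..0, z ς := by linarith
      rw [this]
      calc |(∫ ς in (s-1)..(0:ℝ), z ς) - ∫ ς in (-1:ℝ)..0, z ς|
          ≤ |∫ ς in (s-1)..(0:ℝ), z ς| + |∫ ς in (-1:ℝ)..0, z ς| := abs_sub _ _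
        _ ≤ |∫ ς in (s-1)..(0:ℝ), z ς| + M := by linarith
    have hC' : C * g (s - 1) = Real.exp
        (2 + 2 * ε * M + (2 * (s-1) + 2 * ε * |∫ ς in (s-1)..(0:ℝ), z ς| + 2 * ε * |z (s-1)|)) := by
      rw [hC, hg]
      rw [← Real.exp_add, ← Real.exp_add]
    rw [hC']
    apply Real.exp_le_exp.2
    have := mul_le_mul_of_nonneg_left h2 (by linarith : (0:ℝ) ≤ 2 * ε)
    nlinarith
  -- integrability of the bound
  have hginteg : IntegrableOn g (Set.Iic (0:ℝ)) := hint
  have hgm1 : IntegrableOn g (Set.Iic (-1:ℝ)) :=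
    hginteg.mono_set (Set.Iic_subset_Iic.2 (by norm_num))
  have hmp : MeasurePreserving (fun x : ℝ => x - 1) volume volume :=
    measurePreserving_sub_right volume 1
  have hemb : MeasurableEmbedding (fun x : ℝ => x - 1) :=
    (Homeomorph.subRight (1:ℝ)).measurableEmbedding
  have hpre : (fun x : ℝ => x - 1) ⁻¹' Set.Iic (-1:ℝ) = Set.Iic (0:ℝ) := by
    ext x; simp
  have hcomp : IntegrableOn (fun s => g (s - 1)) (Set.Iic (0:ℝ)) := by
    have := (hmp.integrableOn_comp_preimage hemb (s := Set.Iic (-1:ℝ))).2 hgm1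
    rwa [hpre] at this
  have hCcomp : IntegrableOn (fun s => C * g (s - 1)) (Set.Iic (0:ℝ)) :=
    hcomp.const_mul C
  -- main chain
  calc (∫ s in Set.Iic (0:ℝ),
        Real.exp (2 * s + 2 * ε * |∫ ς in s..(0:ℝ), z (ς - 1)| + 2 * ε * |z (s - 1)|))
      ≤ ∫ s in Set.Iic (0:ℝ), C * g (s - 1) := by
        apply setIntegral_mono_on hint' hCcomp measurableSet_Iic
        intro x _; exact hpoint x
    _ = C * ∫ s in Set.Iic (0:ℝ), g (s - 1) := by rw [MeasureTheory.integral_const_mul]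
    _ = C * ∫ s in Set.Iic (-1:ℝ), g s := by
        congr 1
        rw [← hpre]
        exact hmp.setIntegral_preimage_emb hemb g _
    _ ≤ C * ∫ s in Set.Iic (0:ℝ), g s := by
        apply mul_le_mul_of_nonneg_left
        · apply setIntegral_mono_set hginteg
          · exact Filter.Eventually.of_forall fun s => (Real.exp_pos _).le
          · exact (Set.Iic_subset_Iic.2 (by norm_num)).eventuallyLE
        · positivity
end
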